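/- arXiv:2408.07546 — 5 statements merged into one kernel-verified Lean document; each statement's English description precedes it below -/
import Mathlib

section
/- Let M be a matroid, B a basis of M, and e ∈ B. If r ∉ B is such that B − e + r is independent and r has minimum weight among all such replacement candidates (with respect to a weight function w : E → ℝ assigning distinct weights), and B is the unique minimum-weight basis of M, then B − e + r is a minimum-weight basis of the matroid M restricted to E − e. -/
open Finset

/-- A matroid on a finite ground set, given by its ground set and
independence predicate, following the axioms in the paper. -/
structure FinMatroid (α : Type*) [DecidableEq α] where
  E : Finset α
  Indep : Finset α → Prop
  empty_indep : Indep ∅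
  indep_subset_ground : ∀ {A}, Indep A → A ⊆ E
  indep_subset : ∀ {A B}, Indep A → B ⊆ A → Indep B
  exchange : ∀ {A B}, Indep A → Indep B → B.card < A.card →
    ∃ a ∈ A \ B, Indep (insert a B)

namespace FinMatroid

variable {α : Type*} [DecidableEq α]

/-- A basis is an inclusion-wise maximal independent set. -/
def IsBasis (M : FinMatroid α) (B : Finset α) : Prop :=
  M.Indep B ∧ ∀ A, M.Indep A → B ⊆ A → A = B

/-- Restriction of a matroid to a subset of the ground set. -/
def restrict (M : FinMatroid α) (E' : Finset α) : FinMatroid α where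
  E := M.E ∩ E'
  Indep A := M.Indep A ∧ A ⊆ E'
  empty_indep := ⟨M.empty_indep, empty_subset _⟩
  indep_subset_ground := fun h => subset_inter (M.indep_subset_ground h.1) h.2
  indep_subset := fun h hBA => ⟨M.indep_subset h.1 hBA, hBA.trans h.2⟩
  exchange := by
    intro A B hA hB hlt
    obtain ⟨x, hx, hi⟩ := M.exchange hA.1 hB.1 hlt
    exact ⟨x, hx, hi, insert_subset_iff.2 ⟨hA.2 (mem_sdiff.mp hx).1, hB.2⟩⟩

/-- Deletion of a set of elements from a matroid. -/
def delete (M : FinMatroid α) (F : Finset α) : FinMatroid α :=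
  M.restrict (M.E \ F)

/-- The weight of a set of elements. -/
def weight (w : α → ℝ) (B : Finset α) : ℝ := ∑ e ∈ B, w e

/-- A minimum-weight basis. -/
def IsMinBasis (M : FinMatroid α) (w : α → ℝ) (B : Finset α) : Prop :=
  M.IsBasis B ∧ ∀ B', M.IsBasis B' → weight w B ≤ weight w B'

/-- `r` is the (minimum-weight) replacement element of `g` in the basis `B`. -/
def IsReplacement (M : FinMatroid α) (w : α → ℝ) (B : Finset α) (g r : α) : Prop :=
  g ∈ B ∧ r ∈ M.E ∧ r ∉ B ∧ M.Indep (insert r (B.erase g)) ∧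
  ∀ r' ∈ M.E, r' ∉ B → M.Indep (insert r' (B.erase g)) → w r ≤ w r'

/-- A circuit is a minimal dependent set. -/
def IsCircuit (M : FinMatroid α) (C : Finset α) : Prop :=
  C ⊆ M.E ∧ ¬ M.Indep C ∧ ∀ x ∈ C, M.Indep (C.erase x)

end FinMatroid

open FinMatroid

variable {α : Type*} [DecidableEq α]

section AuxLemmas

variable {α : Type*} [DecidableEq α]

/-- Any independent set has cardinality at most that of a basis. -/
lemma aux_card_le_basis {M : FinMatroid α} {A B : Finset α}
    (hA : M.Indep A) (hB : M.IsBasis B) : A.card ≤ B.card := by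
  by_contra h
  push_neg at h
  obtain ⟨a, ha, hi⟩ := M.exchange hA hB.1 h
  have heq := hB.2 _ hi (Finset.subset_insert _ _)
  exact (Finset.mem_sdiff.mp ha).2 (heq ▸ Finset.mem_insert_self a B)

/-- If every element of `Y` outside `X` cannot be added to the independent set `X`,
then every independent subset of `Y` has cardinality at most that of `X`. -/
lemma aux_span_le {M : FinMatroid α} {X Y Z : Finset α}
    (hXi : M.Indep X)
    (hY : ∀ y ∈ Y, y ∉ X → ¬ M.Indep (insert y X))
    (hZ : M.Indep Z) (hZY : Z ⊆ Y) : Z.card ≤ X.card := by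
  by_contra h
  push_neg at h
  obtain ⟨a, ha, hi⟩ := M.exchange hZ hXi h
  obtain ⟨haZ, haX⟩ := Finset.mem_sdiff.mp ha
  exact hY a (hZY haZ) haX hi

/-- An independent set contained in `Y` extends to a maximal independent subset of `Y`. -/
lemma aux_exists_maximal {M : FinMatroid α} {S Y : Finset α}
    (hS : M.Indep S) (hSY : S ⊆ Y) :
    ∃ A, M.Indep A ∧ S ⊆ A ∧ A ⊆ Y ∧ ∀ y ∈ Y, y ∉ A → ¬ M.Indep (insert y A) := by
  classical
  set 𝒜 := Y.powerset.filter (fun A => M.Indep A ∧ S ⊆ A) with h𝒜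
  have hne : 𝒜.Nonempty :=
    ⟨S, Finset.mem_filter.mpr ⟨Finset.mem_powerset.mpr hSY, hS, subset_rfl⟩⟩
  obtain ⟨A, hA, hmax⟩ := 𝒜.exists_max_image Finset.card hne
  obtain ⟨hAY, hAi, hSA⟩ := Finset.mem_filter.mp hA
  refine ⟨A, hAi, hSA, Finset.mem_powerset.mp hAY, ?_⟩
  intro y hyY hyA hind
  have hmem : insert y A ∈ 𝒜 := Finset.mem_filter.mpr
    ⟨Finset.mem_powerset.mpr (Finset.insert_subset hyY (Finset.mem_powerset.mp hAY)),
     hind, hSA.trans (Finset.subset_insert _ _)⟩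
  have hle := hmax _ hmem
  rw [Finset.card_insert_of_notMem hyA] at hle
  omega

end AuxLemmas

/-- the unique min-weight basis with `e` swapped for its replacement
element is a min-weight basis of the deletion matroid. -/
theorem replacement_gives_min_basis (M : FinMatroid α) (w : α → ℝ)
    (hw : Set.InjOn w ↑M.E)
    (B : Finset α) (hB : M.IsMinBasis w B)
    (huniq : ∀ B', M.IsMinBasis w B' → B' = B)
    (e : α) (he : e ∈ B) (r : α)
    (hrepl : M.IsReplacement w B e r) :
    (M.delete {e}).IsMinBasis w (insert r (B.erase e)) := by
  classical
  obtain ⟨heB, hrE, hrB, hri, hrmin⟩ := hrepl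
  have hBind : M.Indep B := hB.1.1
  have hXi : M.Indep (B.erase e) := M.indep_subset hBind (Finset.erase_subset _ _)
  have hrX : r ∉ B.erase e := fun h => hrB (Finset.erase_subset _ _ h)
  have hBpos : 1 ≤ B.card := Finset.card_pos.mpr ⟨e, he⟩
  have hXcard : (B.erase e).card = B.card - 1 := Finset.card_erase_of_mem he
  have hcardB' : (insert r (B.erase e)).card = B.card := by
    rw [Finset.card_insert_of_notMem hrX, hXcard]; omega
  have hNind : ∀ A : Finset α, (M.delete {e}).Indep A ↔ (M.Indep A ∧ e ∉ A) := by
    intro A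
    show M.Indep A ∧ A ⊆ M.E \ {e} ↔ _
    constructor
    · rintro ⟨h1, h2⟩
      exact ⟨h1, fun he' => (Finset.mem_sdiff.mp (h2 he')).2 (Finset.mem_singleton_self e)⟩
    · rintro ⟨h1, h2⟩
      refine ⟨h1, fun x hx => Finset.mem_sdiff.mpr ⟨M.indep_subset_ground h1 hx, ?_⟩⟩
      intro hxe
      exact h2 ((Finset.mem_singleton.mp hxe) ▸ hx)
  have heB' : e ∉ insert r (B.erase e) := by
    intro hmem
    rcases Finset.mem_insert.mp hmem with h | h
    · exact hrB (h ▸ he)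
    · exact (Finset.mem_erase.mp h).1 rfl
  have hNB' : (M.delete {e}).Indep (insert r (B.erase e)) := (hNind _).mpr ⟨hri, heB'⟩
  have hbasisB' : (M.delete {e}).IsBasis (insert r (B.erase e)) := by
    refine ⟨hNB', fun A hA hsub => ?_⟩
    have hAM : M.Indep A := ((hNind _).mp hA).1
    have hle := aux_card_le_basis hAM hB.1
    exact (Finset.eq_of_subset_of_card_le hsub (by omega)).symm
  refine ⟨hbasisB', ?_⟩
  intro D hD
  have hDM : M.Indep D := ((hNind _).mp hD.1).1
  have heD : e ∉ D := ((hNind _).mp hD.1).2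
  have hDcard1 : D.card ≤ B.card := aux_card_le_basis hDM hB.1
  have hDcard2 : (insert r (B.erase e)).card ≤ D.card := aux_card_le_basis hNB' hD
  have hDB : D.card = B.card := by omega
  set P := D.filter (fun x => x ∉ B ∧ M.Indep (insert x (B.erase e))) with hP
  have hDPi : M.Indep (D \ P) := M.indep_subset hDM (Finset.sdiff_subset)
  -- the swap set `insert e (D \ P)` is independent
  have hSi : M.Indep (insert e (D \ P)) := by
    by_contra hS
    obtain ⟨W, hWi, hDPW, hWY, hWmax⟩ :=
      aux_exists_maximal hDPi (Finset.subset_union_right : D \ P ⊆ B.erase e ∪ (D \ P))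
    have hhyp : ∀ y ∈ B.erase e ∪ (D \ P), y ∉ B.erase e →
        ¬ M.Indep (insert y (B.erase e)) := by
      intro y hy hyX hind
      have hyD : y ∈ D \ P := (Finset.mem_union.mp hy).resolve_left hyX
      obtain ⟨hyD', hyP⟩ := Finset.mem_sdiff.mp hyD
      have hyB : y ∉ B := fun hyB =>
        hyX (Finset.mem_erase.mpr ⟨fun h => heD (h ▸ hyD'), hyB⟩)
      exact hyP (Finset.mem_filter.mpr ⟨hyD', hyB, hind⟩)
    have h1 : W.card ≤ (B.erase e).card := aux_span_le hXi hhyp hWi hWY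
    have h2 : B.card ≤ W.card := by
      refine aux_span_le (Y := insert e (B.erase e ∪ (D \ P))) hWi ?_ hBind ?_
      · intro y hy hyW
        rcases Finset.mem_insert.mp hy with rfl | hy'
        · intro hind
          exact hS (M.indep_subset hind (Finset.insert_subset_insert _ hDPW))
        · exact hWmax y hy' hyW
      · intro b hb
        rcases eq_or_ne b e with rfl | hne
        · exact Finset.mem_insert_self _ _
        · exact Finset.mem_insert_of_mem
            (Finset.mem_union_left _ (Finset.mem_erase.mpr ⟨hne, hb⟩))
    omega
  -- extend it to a maximal independent subset of `insert e D`
  obtain ⟨A, hAi, hSA, hAY, hAmax⟩ :=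
    aux_exists_maximal hSi (Finset.insert_subset_insert _ (Finset.sdiff_subset))
  have hAcard1 : A.card ≤ B.card := aux_card_le_basis hAi hB.1
  have hAcard2 : D.card ≤ A.card := aux_span_le hAi hAmax hDM (Finset.subset_insert e D)
  have hAcard : A.card = B.card := by omega
  have heA : e ∈ A := hSA (Finset.mem_insert_self _ _)
  have hAe_sub : A.erase e ⊆ D := by
    intro y hy
    obtain ⟨hne, hyA⟩ := Finset.mem_erase.mp hy
    rcases Finset.mem_insert.mp (hAY hyA) with h | h
    · exact absurd h hne
    · exact h
  have hcardAe : (A.erase e).card = D.card - 1 := by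
    rw [Finset.card_erase_of_mem heA]; omega
  have hone : (D \ A.erase e).card = 1 := by
    rw [Finset.card_sdiff_of_subset hAe_sub]; omega
  obtain ⟨x, hx⟩ := Finset.card_eq_one.mp hone
  have hxD : x ∈ D ∧ x ∉ A.erase e :=
    Finset.mem_sdiff.mp (hx ▸ Finset.mem_singleton_self x)
  have hxe : x ≠ e := fun h => heD (h ▸ hxD.1)
  have hxA : x ∉ A := fun h => hxD.2 (Finset.mem_erase.mpr ⟨hxe, h⟩)
  have hxP : x ∈ P := by
    by_contra hxP
    exact hxA (hSA (Finset.mem_insert_of_mem (Finset.mem_sdiff.mpr ⟨hxD.1, hxP⟩)))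
  obtain ⟨hxD', hxB, hxind⟩ := Finset.mem_filter.mp hxP
  have hwrx : w r ≤ w x := hrmin x (M.indep_subset_ground hDM hxD.1) hxB hxind
  have hAeD : A.erase e = D.erase x := by
    apply Finset.eq_of_subset_of_card_le
    · intro y hy
      exact Finset.mem_erase.mpr ⟨fun h => hxD.2 (h ▸ hy), hAe_sub hy⟩
    · rw [Finset.card_erase_of_mem hxD.1, hcardAe]
  have hAbasis : M.IsBasis A := by
    refine ⟨hAi, fun A' hA' hsub => ?_⟩
    have hle := aux_card_le_basis hA' hB.1
    exact (Finset.eq_of_subset_of_card_le hsub (by omega)).symm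
  have hwBA : weight w B ≤ weight w A := hB.2 A hAbasis
  have e1 : weight w (insert r (B.erase e)) = w r + weight w (B.erase e) :=
    Finset.sum_insert hrX
  have e2 : w e + weight w (A.erase e) = weight w A := Finset.add_sum_erase A w heA
  have e3 : weight w (A.erase e) = weight w D - w x := by
    rw [hAeD]; exact Finset.sum_erase_eq_sub hxD.1
  have e4 : w e + weight w (B.erase e) = weight w B := Finset.add_sum_erase B w he
  rw [e1]
  rw [e3] at e2
  linarith
end

section
/- Let M be a matroid with weight function w and unique minimum weight bases for all restrictions. For any subset F ⊆ E, the minimum-weight basis of M restricted to E \ F can be obtained by iteratively deleting the elements of F from the current minimum-weight basis one at a time (in any order) and replacing each deleted basis element by its minimum-weight replacement element; elements of F not in the current basis are simply deleted. -/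
open Finset

open FinMatroid

variable {α : Type*} [DecidableEq α]

/-- Iterative deletion-and-replacement process: starting from matroid `M` and
basis `B`, deleting the elements of `F` one at a time (in any order), replacing
each deleted basis element by its minimum-weight replacement element and simply
deleting elements not in the current basis, yields the set `B'`. -/
inductive IterDel (w : α → ℝ) :
    FinMatroid α → Finset α → Finset α → Finset α → Prop where
  | nil (M : FinMatroid α) (B : Finset α) : IterDel w M B ∅ B
  | skip (M : FinMatroid α) (B F : Finset α) (g : α) (B' : Finset α)
      (hgF : g ∈ F) (hg : g ∉ B)
      (h : IterDel w (M.delete {g}) B (F.erase g) B') :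
      IterDel w M B F B'
  | swap (M : FinMatroid α) (B F : Finset α) (g r : α) (B' : Finset α)
      (hgF : g ∈ F)
      (hrepl : M.IsReplacement w B g r)
      (h : IterDel w (M.delete {g}) (insert r (B.erase g)) (F.erase g) B') :
      IterDel w M B F B'

section Auxiliary

variable {α : Type*} [DecidableEq α]

lemma findep_card_le_basis (M : FinMatroid α) {I B : Finset α} (hI : M.Indep I)
    (hB : M.IsBasis B) : I.card ≤ B.card := by
  by_contra h
  push_neg at h
  obtain ⟨x, hx, hind⟩ := M.exchange hI hB.1 h
  have heq := hB.2 _ hind (subset_insert _ _)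
  rw [mem_sdiff] at hx
  exact hx.2 (heq ▸ mem_insert_self x B)

lemma finbasis_card_eq (M : FinMatroid α) {B₁ B₂ : Finset α} (h₁ : M.IsBasis B₁)
    (h₂ : M.IsBasis B₂) : B₁.card = B₂.card :=
  le_antisymm (findep_card_le_basis M h₁.1 h₂) (findep_card_le_basis M h₂.1 h₁)

lemma finbasis_of_card (M : FinMatroid α) {I B₀ : Finset α} (hI : M.Indep I)
    (hB₀ : M.IsBasis B₀) (hcard : I.card = B₀.card) : M.IsBasis I := by
  refine ⟨hI, fun A hA hsub => ?_⟩
  have h1 := findep_card_le_basis M hA hB₀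
  exact (Finset.eq_of_subset_of_card_le hsub (by omega)).symm

lemma finexists_maximal (M : FinMatroid α) {T I : Finset α} (hI : M.Indep I) (hIT : I ⊆ T) :
    ∃ J, M.Indep J ∧ I ⊆ J ∧ J ⊆ T ∧ ∀ e ∈ T, M.Indep (insert e J) → e ∈ J := by
  classical
  suffices H : ∀ n (I : Finset α), M.Indep I → I ⊆ T → (T \ I).card ≤ n →
      ∃ J, M.Indep J ∧ I ⊆ J ∧ J ⊆ T ∧ ∀ e ∈ T, M.Indep (insert e J) → e ∈ J from
    H (T \ I).card I hI hIT le_rfl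
  intro n
  induction n with
  | zero =>
    intro I hI hIT hc
    refine ⟨I, hI, Finset.Subset.refl _, hIT, fun e he _ => ?_⟩
    by_contra heI
    have h1 : e ∈ T \ I := mem_sdiff.2 ⟨he, heI⟩
    have h2 := card_pos.2 ⟨e, h1⟩
    omega
  | succ n ih =>
    intro I hI hIT hc
    by_cases h : ∀ e ∈ T, M.Indep (insert e I) → e ∈ I
    · exact ⟨I, hI, Finset.Subset.refl _, hIT, h⟩
    · push_neg at h
      obtain ⟨e, heT, hind, heI⟩ := h
      have h2 : e ∈ T \ I := mem_sdiff.2 ⟨heT, heI⟩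
      have hTcard : (T \ insert e I).card ≤ n := by
        have h1 : T \ insert e I = (T \ I).erase e := by
          ext x
          simp only [mem_sdiff, mem_erase, mem_insert]
          tauto
        have h3 := card_pos.2 ⟨e, h2⟩
        rw [h1, card_erase_of_mem h2]
        omega
      obtain ⟨J, hJ, hIJ, hJT, hmax⟩ := ih (insert e I) hind (insert_subset heT hIT) hTcard
      exact ⟨J, hJ, (subset_insert _ _).trans hIJ, hJT, hmax⟩

lemma fincard_le_of_maximal (M : FinMatroid α) {T J₁ J₂ : Finset α} (h₁ : M.Indep J₁)
    (h₁T : J₁ ⊆ T) (h₂ : M.Indep J₂) (h₂T : J₂ ⊆ T)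
    (hmax : ∀ e ∈ T, M.Indep (insert e J₂) → e ∈ J₂) : J₁.card ≤ J₂.card := by
  by_contra h
  push_neg at h
  obtain ⟨a, ha, hind⟩ := M.exchange h₁ h₂ h
  rw [mem_sdiff] at ha
  exact ha.2 (hmax a (h₁T ha.1) hind)

/-- Symmetric basis exchange. -/
lemma finsym_exchange (M : FinMatroid α) {A B : Finset α} (hA : M.IsBasis A)
    (hB : M.IsBasis B) {a : α} (haA : a ∈ A) (haB : a ∉ B) :
    ∃ b ∈ B, b ∉ A ∧ M.Indep (insert b (A.erase a)) ∧ M.Indep (insert a (B.erase b)) := by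
  classical
  set S : Finset α := B.filter (fun b => M.Indep (insert a (B.erase b))) with hS
  have hSB : S ⊆ B := filter_subset _ _
  have hABcard : A.card = B.card := finbasis_card_eq M hA hB
  -- Step 1: insert a S is dependent
  have hdep : ¬ M.Indep (insert a S) := by
    intro hind
    have hsub : insert a S ⊆ insert a B := insert_subset_insert _ hSB
    obtain ⟨J, hJ, hSJ, hJT, hJmax⟩ := finexists_maximal M hind hsub
    have hcard1 : B.card ≤ J.card :=
      fincard_le_of_maximal M hB.1 (subset_insert _ _) hJ hJT hJmax
    have hcard2 : J.card ≤ A.card := findep_card_le_basis M hJ hA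
    have haJ : a ∈ J := hSJ (mem_insert_self _ _)
    have hcardB : J.card = B.card := by omega
    have hcardT : (insert a B).card = B.card + 1 := card_insert_of_notMem haB
    have hne : ((insert a B) \ J).Nonempty := by
      rw [← card_pos, card_sdiff_of_subset hJT]
      omega
    obtain ⟨b₀, hb₀⟩ := hne
    rw [mem_sdiff] at hb₀
    have hb₀B : b₀ ∈ B := by
      rcases mem_insert.1 hb₀.1 with h | h
      · exact absurd (h ▸ haJ) hb₀.2
      · exact h
    have hb₀a : b₀ ≠ a := fun h => haB (h ▸ hb₀B)
    have hJeq : J = (insert a B).erase b₀ := by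
      apply Finset.eq_of_subset_of_card_le
      · intro x hx
        exact mem_erase.2 ⟨fun hxe => hb₀.2 (hxe ▸ hx), hJT hx⟩
      · rw [card_erase_of_mem hb₀.1]
        omega
    have hsplit : (insert a B).erase b₀ = insert a (B.erase b₀) :=
      erase_insert_of_ne (fun h => hb₀a h.symm)
    have hb₀S : b₀ ∈ S := by
      rw [hS, mem_filter]
      refine ⟨hb₀B, ?_⟩
      rw [← hsplit, ← hJeq]
      exact hJ
    exact hb₀.2 (hSJ (mem_insert_of_mem hb₀S))
  -- Step 2
  by_contra hcon
  push_neg at hcon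
  set X := A.erase a with hX
  have hXI : M.Indep X := M.indep_subset hA.1 (erase_subset _ _)
  have hSspan : ∀ b ∈ S, M.Indep (insert b X) → b ∈ X := by
    intro b hbS hind
    by_cases hbA : b ∈ A
    · have hba : b ≠ a := fun h => haB (h ▸ hSB hbS)
      exact mem_erase.2 ⟨hba, hbA⟩
    · have hq : M.Indep (insert a (B.erase b)) := (mem_filter.1 hbS).2
      exact absurd hq (hcon b (hSB hbS) hbA hind)
  have hXmax : ∀ e ∈ X ∪ S, M.Indep (insert e X) → e ∈ X := by
    intro e he hi
    rcases mem_union.1 he with h | h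
    · exact h
    · exact hSspan e h hi
  have hSI : M.Indep S := M.indep_subset hB.1 hSB
  obtain ⟨J, hJ, hSJ, hJW, hJmax⟩ := finexists_maximal M hSI subset_union_right
  have hJX : J.card = X.card :=
    le_antisymm (fincard_le_of_maximal M hJ hJW hXI subset_union_left hXmax)
      (fincard_le_of_maximal M hXI subset_union_left hJ hJW hJmax)
  have hJmax' : ∀ e ∈ insert a (X ∪ S), M.Indep (insert e J) → e ∈ J := by
    intro e he hi
    rcases mem_insert.1 he with h | h
    · subst h
      exact (hdep (M.indep_subset hi (insert_subset_insert _ hSJ))).elim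
    · exact hJmax e h hi
  have hAsub : A ⊆ insert a (X ∪ S) := by
    intro x hx
    by_cases hxa : x = a
    · exact hxa ▸ mem_insert_self _ _
    · exact mem_insert_of_mem (mem_union_left _ (mem_erase.2 ⟨hxa, hx⟩))
  have hcard := fincard_le_of_maximal M hA.1 hAsub hJ (hJW.trans (subset_insert _ _)) hJmax'
  have hXcard : X.card + 1 = A.card := by
    rw [hX, card_erase_of_mem haA]
    have := card_pos.2 ⟨a, haA⟩
    omega
  omega

lemma finweight_insert (w : α → ℝ) {s : Finset α} {x : α} (hx : x ∉ s) :
    weight w (insert x s) = w x + weight w s := by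
  simp [weight, Finset.sum_insert hx]

lemma finweight_erase (w : α → ℝ) {s : Finset α} {x : α} (hx : x ∈ s) :
    weight w s = w x + weight w (s.erase x) := by
  rw [weight, weight, ← Finset.add_sum_erase s w hx]

lemma finindep_congr_basis {M₁ M₂ : FinMatroid α} (h : ∀ A, M₁.Indep A ↔ M₂.Indep A)
    {B : Finset α} (hB : M₁.IsBasis B) : M₂.IsBasis B :=
  ⟨(h B).1 hB.1, fun A hA hs => hB.2 A ((h A).2 hA) hs⟩

lemma finindep_congr_minbasis (w : α → ℝ) {M₁ M₂ : FinMatroid α}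
    (h : ∀ A, M₁.Indep A ↔ M₂.Indep A) {B : Finset α} (hB : M₁.IsMinBasis w B) :
    M₂.IsMinBasis w B :=
  ⟨finindep_congr_basis h hB.1,
    fun B' h' => hB.2 B' (finindep_congr_basis (fun A => (h A).symm) h')⟩

lemma findelete_indep_iff (M : FinMatroid α) (F A : Finset α) :
    (M.delete F).Indep A ↔ M.Indep A ∧ A ⊆ M.E \ F := Iff.rfl

lemma findelete_empty_indep (M : FinMatroid α) (A : Finset α) :
    (M.delete ∅).Indep A ↔ M.Indep A := by
  rw [findelete_indep_iff]
  constructor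
  · exact fun h => h.1
  · intro h
    exact ⟨h, by simpa using M.indep_subset_ground h⟩

lemma findelete_delete_indep (M : FinMatroid α) (g : α) (G A : Finset α) :
    ((M.delete {g}).delete G).Indep A ↔ (M.delete (insert g G)).Indep A := by
  rw [findelete_indep_iff, findelete_indep_iff, findelete_indep_iff]
  constructor
  · rintro ⟨⟨h1, h2⟩, h3⟩
    refine ⟨h1, fun x hx => ?_⟩
    have hx2 := h2 hx
    have hx3 := h3 hx
    rw [mem_sdiff, mem_singleton] at hx2
    rw [mem_sdiff] at hx3
    rw [mem_sdiff, mem_insert]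
    exact ⟨hx2.1, fun h => h.elim hx2.2 hx3.2⟩
  · rintro ⟨h1, h2⟩
    refine ⟨⟨h1, fun x hx => ?_⟩, fun x hx => ?_⟩ <;>
    · have hx2 := h2 hx
      rw [mem_sdiff, mem_insert] at hx2
      push_neg at hx2
      simp only [FinMatroid.delete, FinMatroid.restrict, mem_sdiff, mem_inter, mem_singleton]
      tauto

/-- Key lemma: replacing a deleted basis element of the min basis by its
minimum-weight replacement gives a min basis of the deletion. -/
lemma finswap_min (M : FinMatroid α) (w : α → ℝ) (B : Finset α) (k : ℕ)
    (hB : M.IsBasis B) (hBk : B.card = k)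
    (hstrict : ∀ D, M.IsBasis D → D ≠ B → weight w B < weight w D)
    (g r : α) (hrepl : M.IsReplacement w B g r)
    (B₀ : Finset α) (hB₀ : (M.delete {g}).IsBasis B₀) (hB₀k : B₀.card = k) :
    (M.delete {g}).IsMinBasis w (insert r (B.erase g)) := by
  classical
  obtain ⟨hgB, hrE, hrB, hrI, hrmin⟩ := hrepl
  have hrg : r ≠ g := fun h => hrB (h ▸ hgB)
  have hrBe : r ∉ B.erase g := fun h => hrB (erase_subset _ _ h)
  set B₂ := insert r (B.erase g) with hB₂def
  have hBpos : 0 < B.card := card_pos.2 ⟨g, hgB⟩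
  have hB₂card : B₂.card = k := by
    rw [hB₂def, card_insert_of_notMem hrBe, card_erase_of_mem hgB]
    omega
  have hB₂sub : B₂ ⊆ M.E \ {g} := by
    intro x hx
    rcases mem_insert.1 hx with h | h
    · subst h
      exact mem_sdiff.2 ⟨hrE, by simp [hrg]⟩
    · rw [mem_erase] at h
      exact mem_sdiff.2 ⟨M.indep_subset_ground hB.1 h.2, by simp [h.1]⟩
  have hB₂I : (M.delete {g}).Indep B₂ := ⟨hrI, hB₂sub⟩
  have hB₂basis : (M.delete {g}).IsBasis B₂ := finbasis_of_card _ hB₂I hB₀ (by omega)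
  refine ⟨hB₂basis, ?_⟩
  suffices key : ∀ n (B₁ : Finset α), (B₁ \ B).card ≤ n → (M.delete {g}).IsBasis B₁ →
      weight w B₂ ≤ weight w B₁ from fun B₁ h₁ => key (B₁ \ B).card B₁ le_rfl h₁
  intro n
  induction n with
  | zero =>
    intro B₁ hc h₁
    exfalso
    obtain ⟨hI₁, hsub₁⟩ : M.Indep B₁ ∧ B₁ ⊆ M.E \ {g} := h₁.1
    have hg₁ : g ∉ B₁ := fun hh => (mem_sdiff.1 (hsub₁ hh)).2 (mem_singleton_self g)
    have hc₁ : B₁.card = k := by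
      have := finbasis_card_eq _ h₁ hB₀
      omega
    have h1 := card_inter_add_card_sdiff B B₁
    have h2 := card_inter_add_card_sdiff B₁ B
    rw [inter_comm] at h2
    have hgd : g ∈ B \ B₁ := mem_sdiff.2 ⟨hgB, hg₁⟩
    have := card_pos.2 ⟨g, hgd⟩
    omega
  | succ n ih =>
    intro B₁ hc h₁
    obtain ⟨hI₁, hsub₁⟩ : M.Indep B₁ ∧ B₁ ⊆ M.E \ {g} := h₁.1
    have hg₁ : g ∉ B₁ := fun hh => (mem_sdiff.1 (hsub₁ hh)).2 (mem_singleton_self g)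
    have hc₁ : B₁.card = k := by
      have := finbasis_card_eq _ h₁ hB₀
      omega
    have hbasis₁M : M.IsBasis B₁ := finbasis_of_card M hI₁ hB (by omega)
    have hdiff : (B \ B₁).card = (B₁ \ B).card := by
      have h1 := card_inter_add_card_sdiff B B₁
      have h2 := card_inter_add_card_sdiff B₁ B
      rw [inter_comm] at h2
      omega
    have hgd : g ∈ B \ B₁ := mem_sdiff.2 ⟨hgB, hg₁⟩
    have hpos := card_pos.2 ⟨g, hgd⟩
    by_cases hcase : (B \ B₁).card = 1
    · -- B₁ = insert y (B.erase g) for some replacement candidate y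
      have hBB₁ : B \ B₁ = {g} := by
        obtain ⟨x, hx⟩ := card_eq_one.1 hcase
        have hxg : g = x := mem_singleton.1 (hx ▸ hgd)
        rw [hx, hxg]
      have hd1 : (B₁ \ B).card = 1 := by omega
      obtain ⟨y, hy⟩ := card_eq_one.1 hd1
      have hymem : y ∈ B₁ \ B := hy ▸ mem_singleton_self y
      rw [mem_sdiff] at hymem
      have hB₁eq : B₁ = insert y (B.erase g) := by
        have h1 : B.erase g = B₁ ∩ B := by
          rw [erase_eq, ← hBB₁, sdiff_sdiff_self_left, inter_comm]
        rw [h1, insert_eq, ← hy, sdiff_union_inter]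
      have hyE : y ∈ M.E := (mem_sdiff.1 (hsub₁ hymem.1)).1
      have hry : w r ≤ w y := by
        refine hrmin y hyE hymem.2 ?_
        rw [← hB₁eq]
        exact hI₁
      have hyBe : y ∉ B.erase g := fun hh => hymem.2 (erase_subset _ _ hh)
      rw [hB₂def, finweight_insert w hrBe, hB₁eq, finweight_insert w hyBe]
      linarith
    · -- at least two elements differ: use symmetric exchange
      have hne : ((B \ B₁).erase g).Nonempty := by
        rw [← card_pos, card_erase_of_mem hgd]
        omega
      obtain ⟨e, he⟩ := hne
      rw [mem_erase, mem_sdiff] at he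
      obtain ⟨heg, heB, heB₁⟩ := he
      obtain ⟨b, hbB₁, hbB, hind₀, hind₁⟩ := finsym_exchange M hB hbasis₁M heB heB₁
      have hbBe : b ∉ B.erase e := fun hh => hbB (erase_subset _ _ hh)
      have hD₀ne : insert b (B.erase e) ≠ B := fun hh => hbB (hh ▸ mem_insert_self b _)
      have hD₀card : (insert b (B.erase e)).card = k := by
        rw [card_insert_of_notMem hbBe, card_erase_of_mem heB]
        omega
      have hD₀basis : M.IsBasis (insert b (B.erase e)) :=
        finbasis_of_card M hind₀ hB (by omega)
      have hwlt := hstrict _ hD₀basis hD₀ne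
      rw [finweight_insert w hbBe, finweight_erase w heB] at hwlt
      have hwe : w e < w b := by linarith
      have heB₁e : e ∉ B₁.erase b := fun hh => heB₁ (erase_subset _ _ hh)
      have hD₁I : (M.delete {g}).Indep (insert e (B₁.erase b)) := by
        refine ⟨hind₁, fun x hx => ?_⟩
        rcases mem_insert.1 hx with h | h
        · subst h
          exact mem_sdiff.2 ⟨M.indep_subset_ground hB.1 heB, by simp [heg]⟩
        · exact hsub₁ (erase_subset _ _ h)
      have hD₁card : (insert e (B₁.erase b)).card = k := by
        rw [card_insert_of_notMem heB₁e, card_erase_of_mem hbB₁]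
        have := card_pos.2 ⟨b, hbB₁⟩
        omega
      have hD₁basis : (M.delete {g}).IsBasis (insert e (B₁.erase b)) :=
        finbasis_of_card _ hD₁I hB₀ (by omega)
      have hmeas : ((insert e (B₁.erase b)) \ B).card ≤ n := by
        have h1 : (insert e (B₁.erase b)) \ B = (B₁ \ B).erase b := by
          ext x
          simp only [mem_sdiff, mem_insert, mem_erase]
          constructor
          · rintro ⟨h | h, hxB⟩
            · exact absurd (h ▸ heB) hxB
            · exact ⟨h.1, h.2, hxB⟩
          · rintro ⟨hxb, hxB₁, hxB⟩
            exact ⟨Or.inr ⟨hxb, hxB₁⟩, hxB⟩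
        rw [h1, card_erase_of_mem (mem_sdiff.2 ⟨hbB₁, hbB⟩)]
        omega
      have hih := ih _ hmeas hD₁basis
      rw [finweight_insert w heB₁e] at hih
      rw [finweight_erase w hbB₁]
      linarith

lemma finiter_aux (w : α → ℝ) :
    ∀ {M : FinMatroid α} {B F B' : Finset α}, IterDel w M B F B' →
    ∀ k : ℕ, M.IsMinBasis w B → B.card = k → F ⊆ M.E →
    (∀ G ⊆ M.E, G.card ≤ F.card → ∃ B'', (M.delete G).IsBasis B'' ∧ B''.card = k) →
    (∀ G ⊆ M.E, G.card ≤ F.card → ∀ B₁ B₂, (M.delete G).IsMinBasis w B₁ →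
      (M.delete G).IsMinBasis w B₂ → B₁ = B₂) →
    (M.delete F).IsMinBasis w B' := by
  intro M B F B' h
  induction h with
  | nil M B =>
    intro k hB hBk hF hrank huniq
    exact finindep_congr_minbasis w (fun A => (findelete_empty_indep M A).symm) hB
  | skip M B F g B' hgF hg hrec ih =>
    intro k hB hBk hF hrank huniq
    have hgE : g ∈ M.E := hF hgF
    have hFpos : 0 < F.card := card_pos.2 ⟨g, hgF⟩
    have hFec : (F.erase g).card + 1 = F.card := by
      rw [card_erase_of_mem hgF]
      omega
    obtain ⟨B₀, hB₀, hB₀k⟩ := hrank {g} (by simpa using hgE) (by simpa using hFpos)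
    have hF₁ : F.erase g ⊆ (M.delete {g}).E := by
      intro x hx
      rw [mem_erase] at hx
      have hxE := hF hx.2
      exact mem_inter.2 ⟨hxE, mem_sdiff.2 ⟨hxE, by simp [hx.1]⟩⟩
    have hins : ∀ G ⊆ (M.delete {g}).E, G.card ≤ (F.erase g).card →
        g ∉ G ∧ insert g G ⊆ M.E ∧ (insert g G).card ≤ F.card := by
      intro G hG hGc
      have hgG : g ∉ G := fun hgg => by
        have h := hG hgg
        simp only [FinMatroid.delete, FinMatroid.restrict, mem_inter, mem_sdiff,
          mem_singleton] at h
        exact h.2.2 trivial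
      refine ⟨hgG, insert_subset hgE (fun x hx => (mem_inter.1 (hG hx)).1), ?_⟩
      rw [card_insert_of_notMem hgG]
      omega
    have hrank₁ : ∀ G ⊆ (M.delete {g}).E, G.card ≤ (F.erase g).card →
        ∃ B'', ((M.delete {g}).delete G).IsBasis B'' ∧ B''.card = k := by
      intro G hG hGc
      obtain ⟨hgG, hG', hGc'⟩ := hins G hG hGc
      obtain ⟨B'', h1, h2⟩ := hrank (insert g G) hG' hGc'
      exact ⟨B'', finindep_congr_basis (fun A => (findelete_delete_indep M g G A).symm) h1, h2⟩
    have huniq₁ : ∀ G ⊆ (M.delete {g}).E, G.card ≤ (F.erase g).card →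
        ∀ B₁ B₂, ((M.delete {g}).delete G).IsMinBasis w B₁ →
          ((M.delete {g}).delete G).IsMinBasis w B₂ → B₁ = B₂ := by
      intro G hG hGc B₁ B₂ h1 h2
      obtain ⟨hgG, hG', hGc'⟩ := hins G hG hGc
      exact huniq (insert g G) hG' hGc' B₁ B₂
        (finindep_congr_minbasis w (findelete_delete_indep M g G) h1)
        (finindep_congr_minbasis w (findelete_delete_indep M g G) h2)
    have hBI₁ : (M.delete {g}).Indep B := by
      refine ⟨hB.1.1, fun x hx => ?_⟩
      refine mem_sdiff.2 ⟨M.indep_subset_ground hB.1.1 hx, ?_⟩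
      rw [mem_singleton]
      rintro rfl
      exact hg hx
    have hBbasis₁ : (M.delete {g}).IsBasis B := finbasis_of_card _ hBI₁ hB₀ (by omega)
    have hBmin₁ : (M.delete {g}).IsMinBasis w B := by
      refine ⟨hBbasis₁, fun B₁ h₁ => ?_⟩
      have hc₁ : B₁.card = k := by
        have := finbasis_card_eq _ h₁ hB₀
        omega
      obtain ⟨hI₁, hsub₁⟩ : M.Indep B₁ ∧ B₁ ⊆ M.E \ {g} := h₁.1
      exact hB.2 B₁ (finbasis_of_card M hI₁ hB.1 (by omega))
    have hres := ih k hBmin₁ hBk hF₁ hrank₁ huniq₁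
    have h2 := finindep_congr_minbasis w (findelete_delete_indep M g (F.erase g)) hres
    rwa [insert_erase hgF] at h2
  | swap M B F g r B' hgF hrepl hrec ih =>
    intro k hB hBk hF hrank huniq
    have hgE : g ∈ M.E := hF hgF
    have hFpos : 0 < F.card := card_pos.2 ⟨g, hgF⟩
    have hFec : (F.erase g).card + 1 = F.card := by
      rw [card_erase_of_mem hgF]
      omega
    obtain ⟨B₀, hB₀, hB₀k⟩ := hrank {g} (by simpa using hgE) (by simpa using hFpos)
    have hF₁ : F.erase g ⊆ (M.delete {g}).E := by
      intro x hx
      rw [mem_erase] at hx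
      have hxE := hF hx.2
      exact mem_inter.2 ⟨hxE, mem_sdiff.2 ⟨hxE, by simp [hx.1]⟩⟩
    have hins : ∀ G ⊆ (M.delete {g}).E, G.card ≤ (F.erase g).card →
        g ∉ G ∧ insert g G ⊆ M.E ∧ (insert g G).card ≤ F.card := by
      intro G hG hGc
      have hgG : g ∉ G := fun hgg => by
        have h := hG hgg
        simp only [FinMatroid.delete, FinMatroid.restrict, mem_inter, mem_sdiff,
          mem_singleton] at h
        exact h.2.2 trivial
      refine ⟨hgG, insert_subset hgE (fun x hx => (mem_inter.1 (hG hx)).1), ?_⟩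
      rw [card_insert_of_notMem hgG]
      omega
    have hrank₁ : ∀ G ⊆ (M.delete {g}).E, G.card ≤ (F.erase g).card →
        ∃ B'', ((M.delete {g}).delete G).IsBasis B'' ∧ B''.card = k := by
      intro G hG hGc
      obtain ⟨hgG, hG', hGc'⟩ := hins G hG hGc
      obtain ⟨B'', h1, h2⟩ := hrank (insert g G) hG' hGc'
      exact ⟨B'', finindep_congr_basis (fun A => (findelete_delete_indep M g G A).symm) h1, h2⟩
    have huniq₁ : ∀ G ⊆ (M.delete {g}).E, G.card ≤ (F.erase g).card →
        ∀ B₁ B₂, ((M.delete {g}).delete G).IsMinBasis w B₁ →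
          ((M.delete {g}).delete G).IsMinBasis w B₂ → B₁ = B₂ := by
      intro G hG hGc B₁ B₂ h1 h2
      obtain ⟨hgG, hG', hGc'⟩ := hins G hG hGc
      exact huniq (insert g G) hG' hGc' B₁ B₂
        (finindep_congr_minbasis w (findelete_delete_indep M g G) h1)
        (finindep_congr_minbasis w (findelete_delete_indep M g G) h2)
    have hstrict : ∀ D, M.IsBasis D → D ≠ B → weight w B < weight w D := by
      intro D hD hne
      rcases lt_or_eq_of_le (hB.2 D hD) with h | h
      · exact h
      · exfalso
        have hDmin : M.IsMinBasis w D :=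
          ⟨hD, fun B'' h'' => le_trans (le_of_eq h.symm) (hB.2 B'' h'')⟩
        have heq := huniq ∅ (empty_subset _) (by simp) B D
          (finindep_congr_minbasis w (fun A => (findelete_empty_indep M A).symm) hB)
          (finindep_congr_minbasis w (fun A => (findelete_empty_indep M A).symm) hDmin)
        exact hne heq.symm
    have hB₂min : (M.delete {g}).IsMinBasis w (insert r (B.erase g)) :=
      finswap_min M w B k hB.1 hBk hstrict g r hrepl B₀ hB₀ hB₀k
    have hgB : g ∈ B := hrepl.1
    have hrB : r ∉ B := hrepl.2.2.1
    have hB₂k : (insert r (B.erase g)).card = k := by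
      rw [card_insert_of_notMem (fun hh => hrB (erase_subset _ _ hh)),
        card_erase_of_mem hgB]
      have := card_pos.2 ⟨g, hgB⟩
      omega
    have hres := ih k hB₂min hB₂k hF₁ hrank₁ huniq₁
    have h2 := finindep_congr_minbasis w (findelete_delete_indep M g (F.erase g)) hres
    rwa [insert_erase hgF] at h2

end Auxiliary

/-- iteratively deleting the elements of `F` in any order and
replacing basis elements by their replacement elements yields the minimum-weight
basis of `M` with `F` deleted. -/
theorem iter_delete_gives_min_basis (M : FinMatroid α) (w : α → ℝ) (k : ℕ)
    (B : Finset α) (hB : M.IsMinBasis w B) (hBk : B.card = k)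
    (F : Finset α) (hF : F ⊆ M.E)
    (hrank : ∀ G ⊆ M.E, G.card ≤ F.card →
      ∃ B'', (M.delete G).IsBasis B'' ∧ B''.card = k)
    (huniq : ∀ G ⊆ M.E, G.card ≤ F.card → ∀ B₁ B₂,
      (M.delete G).IsMinBasis w B₁ → (M.delete G).IsMinBasis w B₂ → B₁ = B₂)
    (B' : Finset α) (h : IterDel w M B F B') :
    (M.delete F).IsMinBasis w B' := by
  exact finiter_aux w h k hB hBk hF hrank huniq
end

section
/- Let M be a matroid with weight function w, and define bases B^0, B^1, ..., B^ℓ by: B^0 is a minimum-weight basis of M, and for i > 0, B^i is a minimum-weight basis of M restricted to E \ (B^0 ∪ ... ∪ B^{i−1}). Let U^ℓ = B^0 ∪ ... ∪ B^ℓ. Then for any F ⊆ E with |F| ≤ ℓ and any e ∈ E \ F with e ∉ U^ℓ, the element e is not contained in any minimum-weight basis of M restricted to E \ F. -/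
open Finset

namespace FinMatroid

variable {α : Type*} [DecidableEq α]

lemma indep_card_le_basis {M : FinMatroid α} {B A : Finset α}
    (hB : M.IsBasis B) (hA : M.Indep A) : A.card ≤ B.card := by
  by_contra h
  push_neg at h
  obtain ⟨a, ha, hind⟩ := M.exchange hA hB.1 h
  have heq := hB.2 _ hind (Finset.subset_insert _ _)
  exact (Finset.mem_sdiff.mp ha).2 (heq ▸ Finset.mem_insert_self a B)

lemma isBasis_of_card {M : FinMatroid α} {B J : Finset α}
    (hB : M.IsBasis B) (hJ : M.Indep J) (hcard : B.card ≤ J.card) : M.IsBasis J := by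
  refine ⟨hJ, fun A hA hJA => ?_⟩
  exact Finset.eq_of_subset_of_card_le hJA ((indep_card_le_basis hB hA).trans hcard) ▸ rfl

lemma exists_max_indep (M : FinMatroid α) (X I : Finset α) (hI : M.Indep I) (hIX : I ⊆ X) :
    ∃ J, M.Indep J ∧ I ⊆ J ∧ J ⊆ X ∧
      (∀ a ∈ X, a ∉ J → ¬ M.Indep (insert a J)) ∧
      (∀ J', M.Indep J' → J' ⊆ X → J'.card ≤ J.card) := by
  classical
  set S : Set (Finset α) := {J | M.Indep J ∧ I ⊆ J ∧ J ⊆ X} with hS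
  have hfin : S.Finite := Set.Finite.subset (X.powerset : Finset (Finset α)).finite_toSet
    (fun J hJ => Finset.mem_coe.mpr (Finset.mem_powerset.mpr hJ.2.2))
  obtain ⟨J, hJS, hmax⟩ := Set.Finite.exists_maximalFor Finset.card S hfin
    ⟨I, hI, Finset.Subset.refl _, hIX⟩
  have hnoadd : ∀ a ∈ X, a ∉ J → ¬ M.Indep (insert a J) := by
    intro a haX haJ hind
    have hmem : insert a J ∈ S :=
      ⟨hind, hJS.2.1.trans (Finset.subset_insert _ _), Finset.insert_subset haX hJS.2.2⟩
    have hc := hmax hmem (Finset.card_le_card (Finset.subset_insert _ _))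
    rw [Finset.card_insert_of_notMem haJ] at hc
    omega
  refine ⟨J, hJS.1, hJS.2.1, hJS.2.2, hnoadd, ?_⟩
  intro J' hJ' hJ'X
  by_contra h
  push_neg at h
  obtain ⟨a, ha, hind⟩ := M.exchange hJ' hJS.1 h
  exact hnoadd a (hJ'X (Finset.mem_sdiff.mp ha).1) (Finset.mem_sdiff.mp ha).2 hind

lemma swap_basis {M : FinMatroid α} {B C : Finset α} {e : α}
    (hB : M.IsBasis B) (heB : e ∈ B) (hC : M.IsCircuit C) (heC : e ∈ C) :
    ∃ g ∈ C.erase e, g ∉ B ∧ M.IsBasis (insert g (B.erase e)) := by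
  classical
  set I := B.erase e with hIdef
  set K := C.erase e with hKdef
  have hIindep : M.Indep I := M.indep_subset hB.1 (Finset.erase_subset _ _)
  have hKindep : M.Indep K := hC.2.2 e heC
  set X := I ∪ K with hXdef
  have heX : e ∉ X := by
    simp only [hXdef, hIdef, hKdef, Finset.mem_union, Finset.mem_erase]
    push_neg
    exact ⟨fun h => absurd rfl h, fun h => absurd rfl h⟩
  obtain ⟨J, hJind, hIJ, hJX, hJnoadd, hJmax⟩ :=
    exists_max_indep M X I hIindep Finset.subset_union_left
  have heJ : e ∉ J := fun h => heX (hJX h)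
  have hdep : ¬ M.Indep (insert e J) := by
    intro hind
    obtain ⟨J', hJ'ind, hKJ', hJ'X, hJ'noadd, hJ'max⟩ :=
      exists_max_indep M (insert e X) K hKindep
        ((Finset.subset_union_right (s₁ := I)).trans (Finset.subset_insert _ _))
    have heJ' : e ∉ J' := by
      intro h
      have hCJ' : C ⊆ J' := by
        intro x hx
        by_cases hxe : x = e
        · exact hxe ▸ h
        · exact hKJ' (Finset.mem_erase.mpr ⟨hxe, hx⟩)
      exact hC.2.1 (M.indep_subset hJ'ind hCJ')
    have h1 : J'.card ≤ J.card := hJmax J' hJ'ind (fun x hx => by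
      rcases Finset.mem_insert.mp (hJ'X hx) with rfl | h
      · exact absurd hx heJ'
      · exact h)
    have h2 : (insert e J).card ≤ J'.card := hJ'max _ hind
      (Finset.insert_subset (Finset.mem_insert_self _ _) (hJX.trans (Finset.subset_insert _ _)))
    rw [Finset.card_insert_of_notMem heJ] at h2
    omega
  have hcardge : B.card ≤ J.card := by
    by_contra h
    push_neg at h
    obtain ⟨a, ha, hind⟩ := M.exchange hB.1 hJind h
    obtain ⟨haB, haJ⟩ := Finset.mem_sdiff.mp ha
    by_cases hae : a = e
    · exact hdep (hae ▸ hind)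
    · exact haJ (hIJ (Finset.mem_erase.mpr ⟨hae, haB⟩))
  have hJB : J.card = B.card := le_antisymm (indep_card_le_basis hB hJind) hcardge
  have hJbasis : M.IsBasis J := isBasis_of_card hB hJind hcardge
  have hIcard : I.card + 1 = B.card := by
    rw [hIdef, Finset.card_erase_of_mem heB]
    have : 0 < B.card := Finset.card_pos.mpr ⟨e, heB⟩
    omega
  have hex : ∃ g ∈ J, g ∉ I := by
    by_contra h
    push_neg at h
    have := Finset.card_le_card h
    omega
  obtain ⟨g, hgJ, hgI⟩ := hex
  have hgK : g ∈ K := (Finset.mem_union.mp (hJX hgJ)).resolve_left hgI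
  have hgB : g ∉ B := by
    intro h
    have hge : g ≠ e := fun hh => heJ (hh ▸ hgJ)
    exact hgI (Finset.mem_erase.mpr ⟨hge, h⟩)
  have hJeq : J = insert g I := by
    refine (Finset.eq_of_subset_of_card_le (Finset.insert_subset hgJ hIJ) ?_).symm
    rw [Finset.card_insert_of_notMem hgI]
    omega
  exact ⟨g, hgK, hgB, hJeq ▸ hJbasis⟩

lemma exists_circuit (M : FinMatroid α) {D : Finset α} (hD : ¬ M.Indep D) (hDE : D ⊆ M.E) :
    ∃ C, C ⊆ D ∧ M.IsCircuit C := by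
  classical
  set S : Set (Finset α) := {C | C ⊆ D ∧ ¬ M.Indep C} with hS
  have hfin : S.Finite := Set.Finite.subset (D.powerset : Finset (Finset α)).finite_toSet
    (fun C hC => Finset.mem_coe.mpr (Finset.mem_powerset.mpr hC.1))
  obtain ⟨C, hCS, hmin⟩ := Set.Finite.exists_minimalFor Finset.card S hfin
    ⟨D, Finset.Subset.refl _, hD⟩
  refine ⟨C, hCS.1, hCS.1.trans hDE, hCS.2, ?_⟩
  intro x hx
  by_contra hdep
  have hmem : C.erase x ∈ S := ⟨(Finset.erase_subset _ _).trans hCS.1, hdep⟩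
  have hc := hmin hmem (Finset.card_le_card (Finset.erase_subset _ _))
  rw [Finset.card_erase_of_mem hx] at hc
  have hpos : 0 < C.card := Finset.card_pos.mpr ⟨x, hx⟩
  omega

lemma delete_empty_indep (M : FinMatroid α) (A : Finset α) :
    (M.delete ∅).Indep A ↔ M.Indep A := by
  constructor
  · exact fun h => h.1
  · exact fun h => ⟨h, by simpa using M.indep_subset_ground h⟩

lemma delete_empty_isBasis (M : FinMatroid α) (A : Finset α) :
    (M.delete ∅).IsBasis A ↔ M.IsBasis A := by
  unfold IsBasis
  simp only [delete_empty_indep]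

lemma delete_empty_isMinBasis (M : FinMatroid α) (w : α → ℝ) (A : Finset α) :
    (M.delete ∅).IsMinBasis w A ↔ M.IsMinBasis w A := by
  unfold IsMinBasis
  simp only [delete_empty_isBasis]

end FinMatroid


open FinMatroid

variable {α : Type*} [DecidableEq α]

/-- with `B^0, …, B^ℓ` obtained by iterated deletion of
minimum-weight bases and `U^ℓ = B^0 ∪ ⋯ ∪ B^ℓ`, no element outside `U^ℓ`
(and outside `F`) belongs to a minimum-weight basis of `M` with `F` deleted,
for any `F` with `|F| ≤ ℓ`. -/
theorem not_in_Ul_not_in_interdicted_basis (M : FinMatroid α) (w : α → ℝ)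
    (hw : Set.InjOn w ↑M.E) (ℓ k : ℕ)
    (Bseq : ℕ → Finset α)
    (h0 : M.IsMinBasis w (Bseq 0))
    (hi : ∀ i, 0 < i → i ≤ ℓ →
      (M.delete ((Finset.range i).biUnion Bseq)).IsMinBasis w (Bseq i))
    (hcard : ∀ i ≤ ℓ, (Bseq i).card = k)
    (hrank : ∀ F ⊆ M.E, F.card ≤ ℓ →
      ∃ B, (M.delete F).IsBasis B ∧ B.card = k)
    (F : Finset α) (hF : F ⊆ M.E) (hFc : F.card ≤ ℓ)
    (e : α) (he : e ∈ M.E) (heF : e ∉ F)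
    (heU : e ∉ (Finset.range (ℓ + 1)).biUnion Bseq)
    (B : Finset α) (hB : (M.delete F).IsMinBasis w B) : e ∉ B := by
  classical
  intro heB
  have hBindep : M.Indep B := hB.1.1.1
  set U : ℕ → Finset α := fun i => (Finset.range i).biUnion Bseq with hU
  have hmin : ∀ i ≤ ℓ, (M.delete (U i)).IsMinBasis w (Bseq i) := by
    intro i hiℓ
    rcases Nat.eq_zero_or_pos i with rfl | hpos
    · have hU0 : U 0 = ∅ := by simp [hU]
      rw [hU0, delete_empty_isMinBasis]
      exact h0
    · exact hi i hpos hiℓ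
  -- ground facts
  have hBiE : ∀ i ≤ ℓ, Bseq i ⊆ M.E \ U i := fun i h => (hmin i h).1.1.2
  have heUi : ∀ i ≤ ℓ, e ∉ U i := by
    intro i hiℓ h
    obtain ⟨j, hj, hj2⟩ := Finset.mem_biUnion.mp h
    exact heU (Finset.mem_biUnion.mpr ⟨j, Finset.mem_range.mpr (by
      have := Finset.mem_range.mp hj; omega), hj2⟩)
  have heBi : ∀ i ≤ ℓ, e ∉ Bseq i := by
    intro i hiℓ h
    exact heU (Finset.mem_biUnion.mpr ⟨i, Finset.mem_range.mpr (by omega), h⟩)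
  -- circuits
  have key : ∀ i, i ≤ ℓ → ∃ Ci : Finset α, M.IsCircuit Ci ∧ e ∈ Ci ∧
      Ci ⊆ insert e (Bseq i) ∧ ∀ f ∈ Ci.erase e, w f < w e := by
    intro i hiℓ
    have hBi := hmin i hiℓ
    have hBiind : M.Indep (Bseq i) := hBi.1.1.1
    have hBig : Bseq i ⊆ M.E \ U i := hBiE i hiℓ
    have hDdep : ¬ M.Indep (insert e (Bseq i)) := by
      intro hind
      have hmem : (M.delete (U i)).Indep (insert e (Bseq i)) :=
        ⟨hind, Finset.insert_subset (Finset.mem_sdiff.mpr ⟨he, heUi i hiℓ⟩) hBig⟩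
      have heq := hBi.1.2 _ hmem (Finset.subset_insert _ _)
      exact heBi i hiℓ (heq ▸ Finset.mem_insert_self e _)
    have hDE : insert e (Bseq i) ⊆ M.E :=
      Finset.insert_subset he (hBig.trans (Finset.sdiff_subset))
    obtain ⟨C, hCD, hCcirc⟩ := exists_circuit M hDdep hDE
    have heC : e ∈ C := by
      by_contra h
      refine hCcirc.2.1 (M.indep_subset hBiind (fun x hx => ?_))
      rcases Finset.mem_insert.mp (hCD hx) with rfl | h'
      · exact absurd hx h
      · exact h'
    have hCEU : C ⊆ M.E \ U i := hCD.trans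
      (Finset.insert_subset (Finset.mem_sdiff.mpr ⟨he, heUi i hiℓ⟩) hBig)
    have hCi : (M.delete (U i)).IsCircuit C := by
      refine ⟨Finset.subset_inter hCcirc.1 hCEU, fun h => hCcirc.2.1 h.1, fun x hx =>
        ⟨hCcirc.2.2 x hx, (Finset.erase_subset _ _).trans hCEU⟩⟩
    refine ⟨C, hCcirc, heC, hCD, ?_⟩
    intro f hf
    obtain ⟨hfe, hfC⟩ := Finset.mem_erase.mp hf
    have hfBi : f ∈ Bseq i := by
      rcases Finset.mem_insert.mp (hCD hfC) with rfl | h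
      · exact absurd rfl hfe
      · exact h
    obtain ⟨g, hgCe, hgBi, hgbasis⟩ := swap_basis hBi.1 hfBi hCi hfC
    have hge : g = e := by
      rcases Finset.mem_insert.mp (hCD (Finset.mem_of_mem_erase hgCe)) with h | h
      · exact h
      · exact absurd h hgBi
    subst hge
    have hle := hBi.2 _ hgbasis
    have hgerase : g ∉ (Bseq i).erase f := fun h => heBi i hiℓ (Finset.mem_of_mem_erase h)
    have hw1 : weight w (insert g ((Bseq i).erase f)) = w g + weight w ((Bseq i).erase f) :=
      Finset.sum_insert hgerase
    have hw2 : weight w ((Bseq i).erase f) + w f = weight w (Bseq i) :=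
      Finset.sum_erase_add _ _ hfBi
    have hwle : w f ≤ w g := by
      unfold weight at hle hw1 hw2
      linarith
    have hne : w f ≠ w g := fun heq => hfe (hw (hCcirc.1 hfC) he heq)
    exact lt_of_le_of_ne hwle hne
  have key' : ∀ i, ∃ Ci : Finset α, i ≤ ℓ → M.IsCircuit Ci ∧ e ∈ Ci ∧
      Ci ⊆ insert e (Bseq i) ∧ ∀ f ∈ Ci.erase e, w f < w e := by
    intro i
    by_cases h : i ≤ ℓ
    · exact (key i h).imp (fun C hC _ => hC)
    · exact ⟨∅, fun hh => absurd hh h⟩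
  choose C hC using key'
  -- C i \ {e} ⊆ Bseq i
  have hCsubB : ∀ i (h : i ≤ ℓ), (C i).erase e ⊆ Bseq i := by
    intro i h x hx
    obtain ⟨hxe, hxC⟩ := Finset.mem_erase.mp hx
    rcases Finset.mem_insert.mp ((hC i h).2.2.1 hxC) with rfl | hh
    · exact absurd rfl hxe
    · exact hh
  -- nonempty
  have hne : ∀ i (h : i ≤ ℓ), ((C i).erase e).Nonempty := by
    intro i h
    rcases Finset.eq_empty_or_nonempty ((C i).erase e) with hemp | hn
    · exfalso
      have hCe : C i = {e} := by
        have h1 : C i ⊆ {e} := by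
          intro x hx
          by_contra hxe
          exact (Finset.notMem_empty x) (hemp ▸ Finset.mem_erase.mpr
            ⟨fun hh => hxe (hh ▸ Finset.mem_singleton_self e), hx⟩)
        exact Finset.Subset.antisymm h1 (Finset.singleton_subset_iff.mpr (hC i h).2.1)
      exact (hC i h).1.2.1 (hCe ▸ M.indep_subset hBindep (Finset.singleton_subset_iff.mpr heB))
    · exact hn
  -- pigeonhole
  obtain ⟨i, hiℓ, hdisjF⟩ : ∃ i, ∃ _ : i ≤ ℓ, ∀ y ∈ (C i).erase e, y ∉ F := by
    by_contra hcon
    push_neg at hcon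
    have hsel : ∀ i : ℕ, ∃ y : α, i ≤ ℓ → y ∈ F ∧ y ∈ (C i).erase e := by
      intro i
      by_cases h : i ≤ ℓ
      · obtain ⟨y, hy1, hy2⟩ := hcon i h
        exact ⟨y, fun _ => ⟨hy2, hy1⟩⟩
      · exact ⟨e, fun hh => absurd hh h⟩
    choose y hy using hsel
    have hcard2 : (Finset.range (ℓ + 1)).card ≤ F.card := by
      apply Finset.card_le_card_of_injOn y
      · intro i hi
        exact (hy i (by have := Finset.mem_range.mp hi; omega)).1
      · intro i hi j hj hij
        by_contra hne2
        have hiℓ' : i ≤ ℓ := by have := Finset.mem_range.mp hi; omega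
        have hjℓ' : j ≤ ℓ := by have := Finset.mem_range.mp hj; omega
        have hyi : y i ∈ Bseq i := hCsubB i hiℓ' (hy i hiℓ').2
        have hyj : y j ∈ Bseq j := hCsubB j hjℓ' (hy j hjℓ').2
        rcases Nat.lt_or_ge i j with hlt | hge
        · have h1 : y i ∈ U j := Finset.mem_biUnion.mpr ⟨i, Finset.mem_range.mpr hlt, hyi⟩
          have h2 : y j ∉ U j := (Finset.mem_sdiff.mp (hBiE j hjℓ' hyj)).2
          exact h2 (hij ▸ h1)
        · have hlt : j < i := by omega
          have h1 : y j ∈ U i := Finset.mem_biUnion.mpr ⟨j, Finset.mem_range.mpr hlt, hyj⟩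
          have h2 : y i ∉ U i := (Finset.mem_sdiff.mp (hBiE i hiℓ' hyi)).2
          exact h2 (hij.symm ▸ h1)
    rw [Finset.card_range] at hcard2
    omega
  -- C i is a circuit of M.delete F
  obtain ⟨hCc, hCe, hCsub, hCw⟩ := hC i hiℓ
  have hCEF : C i ⊆ M.E \ F := by
    intro x hx
    refine Finset.mem_sdiff.mpr ⟨hCc.1 hx, ?_⟩
    by_cases hxe : x = e
    · exact hxe ▸ heF
    · exact hdisjF x (Finset.mem_erase.mpr ⟨hxe, hx⟩)
  have hCF : (M.delete F).IsCircuit (C i) :=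
    ⟨Finset.subset_inter hCc.1 hCEF, fun h => hCc.2.1 h.1, fun x hx =>
      ⟨hCc.2.2 x hx, (Finset.erase_subset _ _).trans hCEF⟩⟩
  obtain ⟨g, hgCe, hgB, hgbasis⟩ := swap_basis hB.1 heB hCF hCe
  have hle := hB.2 _ hgbasis
  have hgerase : g ∉ B.erase e := fun h => hgB (Finset.mem_of_mem_erase h)
  have hw1 : weight w (insert g (B.erase e)) = w g + weight w (B.erase e) :=
    Finset.sum_insert hgerase
  have hw2 : weight w (B.erase e) + w e = weight w B := Finset.sum_erase_add _ _ heB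
  have hwg : w g < w e := hCw g hgCe
  unfold weight at hle hw1 hw2
  linarith
end

section
/- With B^0, B^1, ..., B^ℓ defined by iterated deletion of minimum-weight bases, for every i ∈ {0, ..., ℓ−1} and every e ∈ B^i, the replacement element of e with respect to the basis B^i lies in B^{i+1}. -/
open Finset

open FinMatroid

variable {α : Type*} [DecidableEq α]

lemma card_le_of_maximal (M : FinMatroid α) {S K A : Finset α}
    (hK : M.Indep K) (hmax : ∀ x ∈ S, x ∉ K → ¬ M.Indep (insert x K))
    (hA : M.Indep A) (hAS : A ⊆ S) : A.card ≤ K.card := by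
  by_contra h
  push_neg at h
  obtain ⟨a, ha, hins⟩ := M.exchange hA hK h
  rw [Finset.mem_sdiff] at ha
  exact hmax a (hAS ha.1) ha.2 hins

lemma exists_maximal_indep (M : FinMatroid α) {S A : Finset α}
    (hA : M.Indep A) (hAS : A ⊆ S) :
    ∃ K, A ⊆ K ∧ K ⊆ S ∧ M.Indep K ∧ ∀ x ∈ S, x ∉ K → ¬ M.Indep (insert x K) := by
  classical
  obtain ⟨K, hKmem, hKmax⟩ := Finset.exists_max_image
    (S.powerset.filter (fun K => A ⊆ K ∧ M.Indep K)) Finset.card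
    ⟨A, by simp [hA, hAS]⟩
  simp only [Finset.mem_filter, Finset.mem_powerset] at hKmem
  refine ⟨K, hKmem.2.1, hKmem.1, hKmem.2.2, ?_⟩
  intro x hxS hxK hind
  have hmem : insert x K ∈ S.powerset.filter (fun K => A ⊆ K ∧ M.Indep K) := by
    simp only [Finset.mem_filter, Finset.mem_powerset]
    exact ⟨Finset.insert_subset hxS hKmem.1, hKmem.2.1.trans (Finset.subset_insert _ _), hind⟩
  have h1 := hKmax _ hmem
  rw [Finset.card_insert_of_notMem hxK] at h1
  omega

lemma exists_circuit_subset (M : FinMatroid α) {S : Finset α} (hdep : ¬ M.Indep S) :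
    ∃ C ⊆ S, ¬ M.Indep C ∧ ∀ x ∈ C, M.Indep (C.erase x) := by
  classical
  obtain ⟨C, hCmem, hCmin⟩ := Finset.exists_min_image
    (S.powerset.filter (fun C => ¬ M.Indep C)) Finset.card
    ⟨S, by simp [hdep]⟩
  simp only [Finset.mem_filter, Finset.mem_powerset] at hCmem
  refine ⟨C, hCmem.1, hCmem.2, ?_⟩
  intro x hx
  by_contra hind
  have hmem : C.erase x ∈ S.powerset.filter (fun C => ¬ M.Indep C) :=
    Finset.mem_filter.2 ⟨Finset.mem_powerset.2 ((Finset.erase_subset _ _).trans hCmem.1), hind⟩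
  have h1 := hCmin _ hmem
  have h2 := Finset.card_erase_of_mem hx
  have h3 : 0 < C.card := Finset.card_pos.2 ⟨x, hx⟩
  omega

/-- for `e ∈ B^i`, the replacement element of `e` with respect to
`B^i` (taken in the matroid obtained from `M` by deleting `B^0 ∪ ⋯ ∪ B^{i-1}`)
lies in `B^{i+1}`. -/
theorem replacement_in_next_basis (M : FinMatroid α) (w : α → ℝ)
    (hw : Set.InjOn w ↑M.E) (ℓ k : ℕ)
    (Bseq : ℕ → Finset α)
    (h0 : M.IsMinBasis w (Bseq 0))
    (hi : ∀ i, 0 < i → i ≤ ℓ →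
      (M.delete ((Finset.range i).biUnion Bseq)).IsMinBasis w (Bseq i))
    (hcard : ∀ i ≤ ℓ, (Bseq i).card = k)
    (i : ℕ) (hiℓ : i < ℓ)
    (e r : α) (he : e ∈ Bseq i)
    (hrepl : (M.delete ((Finset.range i).biUnion Bseq)).IsReplacement w
      (Bseq i) e r) :
    r ∈ Bseq (i + 1) := by
  classical
  by_contra hrB1
  set Fi := (Finset.range i).biUnion Bseq with hFidef
  set F1 := (Finset.range (i+1)).biUnion Bseq with hF1def
  set B0 := Bseq i with hB0def
  set B1 := Bseq (i+1) with hB1def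
  have hF1 : F1 = B0 ∪ Fi := by
    rw [hF1def, Finset.range_add_one, Finset.biUnion_insert, hFidef]
  obtain ⟨⟨hB1indep', hB1max⟩, hB1min⟩ := hi (i+1) (Nat.succ_pos i) hiℓ
  have hB1indep : M.Indep B1 := hB1indep'.1
  have hB1g : B1 ⊆ M.E \ F1 := hB1indep'.2
  obtain ⟨heB0, hrE, hrB0, hrIind, hrmin⟩ := hrepl
  have hrIindep : M.Indep (insert r (B0.erase e)) := hrIind.1
  have hrIg : insert r (B0.erase e) ⊆ M.E \ Fi := hrIind.2
  have hrE' : r ∈ M.E \ Fi := (Finset.mem_inter.mp hrE).2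
  have hrF1 : r ∈ M.E \ F1 := by
    rw [Finset.mem_sdiff] at hrE' ⊢
    rw [hF1]
    refine ⟨hrE'.1, fun h => ?_⟩
    rcases Finset.mem_union.mp h with h | h
    · exact hrB0 h
    · exact hrE'.2 h
  have hdisj : ∀ y ∈ B1, y ∉ B0 := by
    intro y hy hyB0
    have h := hB1g hy
    rw [hF1] at h
    exact (Finset.mem_sdiff.mp h).2 (Finset.mem_union_left _ hyB0)
  have hk1 : B1.card = k := hcard (i+1) hiℓ
  have hSg : insert r B1 ⊆ M.E \ F1 := Finset.insert_subset hrF1 hB1g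
  have hSdep : ¬ M.Indep (insert r B1) := by
    intro hind
    have hind1 : (M.delete F1).Indep (insert r B1) := ⟨hind, hSg⟩
    have heq : insert r B1 = B1 := hB1max _ hind1 (Finset.subset_insert _ _)
    exact hrB1 (heq ▸ Finset.mem_insert_self r B1)
  obtain ⟨C, hCS, hCdep, hCmin⟩ := exists_circuit_subset M hSdep
  have hrC : r ∈ C := by
    by_contra h
    apply hCdep
    apply M.indep_subset hB1indep
    intro x hx
    rcases Finset.mem_insert.mp (hCS hx) with h1 | h1
    · exact absurd (h1 ▸ hx) h
    · exact h1
  -- key: every element of C other than r is strictly lighter than r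
  have hkey : ∀ y ∈ C, y ≠ r → w y < w r := by
    intro y hyC hyr
    have hyB1 : y ∈ B1 := (Finset.mem_insert.mp (hCS hyC)).resolve_left hyr
    have hCy_indep : M.Indep (C.erase y) := hCmin y hyC
    have hCyS : C.erase y ⊆ insert r B1 := (Finset.erase_subset _ _).trans hCS
    obtain ⟨K, hCK, hKS, hKind, hKmax⟩ := exists_maximal_indep M hCy_indep hCyS
    have hB1maxS : ∀ x ∈ insert r B1, x ∉ B1 → ¬ M.Indep (insert x B1) := by
      intro x hx hxB1 hind
      rcases Finset.mem_insert.mp hx with h1 | h1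
      · exact hSdep (h1 ▸ hind)
      · exact hxB1 h1
    have hKcard_le : K.card ≤ B1.card := card_le_of_maximal M hB1indep hB1maxS hKind hKS
    have hB1card_le : B1.card ≤ K.card :=
      card_le_of_maximal M hKind hKmax hB1indep (Finset.subset_insert _ _)
    have hKcard : K.card = B1.card := le_antisymm hKcard_le hB1card_le
    have hScard : (insert r B1).card = B1.card + 1 := Finset.card_insert_of_notMem hrB1
    have hsd : ((insert r B1) \ K).card = 1 := by
      rw [Finset.card_sdiff_of_subset hKS]; omega
    obtain ⟨z, hz⟩ := Finset.card_eq_one.mp hsd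
    have hzmem : z ∈ (insert r B1) \ K := hz ▸ Finset.mem_singleton_self z
    have hzS : z ∈ insert r B1 := (Finset.mem_sdiff.mp hzmem).1
    have hzK : z ∉ K := (Finset.mem_sdiff.mp hzmem).2
    have hKeq : K = (insert r B1).erase z := by
      apply Finset.eq_of_subset_of_card_le
      · intro x hx
        exact Finset.mem_erase.mpr ⟨fun h => hzK (h ▸ hx), hKS hx⟩
      · rw [Finset.card_erase_of_mem hzS]; omega
    have hzCy : z ∉ C.erase y := fun h => hzK (hCK h)
    have hzy : z = y := by
      by_contra hne
      have hzC : z ∉ C := fun hc => hzCy (Finset.mem_erase.mpr ⟨hne, hc⟩)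
      apply hCdep
      apply M.indep_subset hKind
      intro x hx
      rw [hKeq]
      exact Finset.mem_erase.mpr ⟨fun hxz => hzC (hxz ▸ hx), hCS hx⟩
    subst hzy
    have hKeq2 : K = insert r (B1.erase z) := by
      rw [hKeq, Finset.erase_insert_of_ne (Ne.symm hyr)]
    have hKg : K ⊆ M.E \ F1 := hKS.trans hSg
    have hKindep1 : (M.delete F1).Indep K := ⟨hKind, hKg⟩
    have hmax1 : ∀ A, (M.delete F1).Indep A → K ⊆ A → A = K := by
      intro A hA hKA
      have hAcard : A.card ≤ B1.card := by
        by_contra h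
        push_neg at h
        obtain ⟨a, ha, hins⟩ := (M.delete F1).exchange hA hB1indep' h
        have heq : insert a B1 = Bseq (i+1) := hB1max _ hins (Finset.subset_insert _ _)
        exact (Finset.mem_sdiff.mp ha).2 (heq ▸ Finset.mem_insert_self a B1)
      exact (Finset.eq_of_subset_of_card_le hKA (by omega)).symm
    have hwle := hB1min K ⟨hKindep1, hmax1⟩
    have hrK : r ∉ B1.erase z := fun h => hrB1 (Finset.mem_of_mem_erase h)
    have hsum : weight w K = w r + (weight w B1 - w z) := by
      rw [hKeq2, weight, Finset.sum_insert hrK]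
      have h2 := Finset.add_sum_erase B1 w hyB1
      have : ∑ x ∈ B1.erase z, w x = (∑ x ∈ B1, w x) - w z := by
        rw [← h2]; ring
      rw [this, weight]
    have hwyr : w z ≤ w r := by
      rw [hsum] at hwle
      linarith
    have hzE : z ∈ M.E := (Finset.mem_sdiff.mp (hB1g hyB1)).1
    have hrEE : r ∈ M.E := (Finset.mem_sdiff.mp hrF1).1
    exact lt_of_le_of_ne hwyr (fun heq => hyr (hw hzE hrEE heq))
  -- find y in C - r usable as a replacement for e
  have hIy : ∃ y ∈ C, y ≠ r ∧ M.Indep (insert y (B0.erase e)) := by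
    by_contra hno
    push_neg at hno
    have hIind : M.Indep (B0.erase e) := M.indep_subset hrIindep (Finset.subset_insert _ _)
    have hImax : ∀ x ∈ (B0.erase e) ∪ C.erase r, x ∉ B0.erase e →
        ¬ M.Indep (insert x (B0.erase e)) := by
      intro x hx hxI
      rcases Finset.mem_union.mp hx with h1 | h1
      · exact absurd h1 hxI
      · obtain ⟨hxr, hxC⟩ := Finset.mem_erase.mp h1
        exact hno x hxC hxr
    have hCr_indep : M.Indep (C.erase r) := hCmin r hrC
    have hCrT : C.erase r ⊆ (B0.erase e) ∪ C :=
      (Finset.erase_subset _ _).trans Finset.subset_union_right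
    obtain ⟨K, hCK, hKT, hKind, hKmax⟩ := exists_maximal_indep M hCr_indep hCrT
    have hrK : r ∈ K := by
      by_contra hrK
      have hKsub : K ⊆ (B0.erase e) ∪ C.erase r := by
        intro x hx
        rcases Finset.mem_union.mp (hKT hx) with h1 | h1
        · exact Finset.mem_union_left _ h1
        · exact Finset.mem_union_right _
            (Finset.mem_erase.mpr ⟨fun h => hrK (h ▸ hx), h1⟩)
      have h1 : K.card ≤ (B0.erase e).card :=
        card_le_of_maximal M hIind hImax hKind hKsub
      have h2 : (insert r (B0.erase e)).card ≤ K.card := by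
        apply card_le_of_maximal M hKind hKmax hrIindep
        intro x hx
        rcases Finset.mem_insert.mp hx with h | h
        · exact Finset.mem_union_right _ (h ▸ hrC)
        · exact Finset.mem_union_left _ h
      have h3 : (insert r (B0.erase e)).card = (B0.erase e).card + 1 :=
        Finset.card_insert_of_notMem (fun h => hrB0 (Finset.mem_of_mem_erase h))
      omega
    apply hCdep
    apply M.indep_subset hKind
    intro x hx
    by_cases hxr : x = r
    · exact hxr ▸ hrK
    · exact hCK (Finset.mem_erase.mpr ⟨hxr, hx⟩)
  obtain ⟨y, hyC, hyr, hyind⟩ := hIy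
  have hyB1 : y ∈ B1 := (Finset.mem_insert.mp (hCS hyC)).resolve_left hyr
  have hylt := hkey y hyC hyr
  have hyE1 : y ∈ M.E \ F1 := hB1g hyB1
  have hyEFi : y ∈ M.E \ Fi := by
    rw [hF1] at hyE1
    rw [Finset.mem_sdiff] at hyE1 ⊢
    exact ⟨hyE1.1, fun h => hyE1.2 (Finset.mem_union_right _ h)⟩
  have hyMiE : y ∈ (M.delete Fi).E :=
    Finset.mem_inter.mpr ⟨(Finset.mem_sdiff.mp hyEFi).1, hyEFi⟩
  have hyB0 : y ∉ B0 := hdisj y hyB1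
  have hyIind : (M.delete Fi).Indep (insert y (B0.erase e)) := by
    refine ⟨hyind, ?_⟩
    intro x hx
    rcases Finset.mem_insert.mp hx with h | h
    · exact h ▸ hyEFi
    · exact hrIg (Finset.mem_insert.mpr (Or.inr h))
  have hge := hrmin y hyMiE hyB0 hyIind
  linarith
end

section
/- Let M be a matroid, B a basis of M, e ∉ B an element such that B + e contains a circuit C in which e is the heaviest element with respect to a weight function w with distinct weights, and B' another basis of M with e ∈ B'. Then C − e cannot be entirely contained outside B' in a way that blocks all exchanges: there exists a sequence of basis exchanges swapping elements of C − e into B' one by one, each exchange removing an element not in C − e, so that eventually all of C − e is contained in a basis together with e — a contradiction. Formally: it is impossible that e ∈ B' and for every f ∈ C − e with f ∉ B', every g with B' − g + f a basis satisfies g ∈ C − e. -/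
open Finset

open FinMatroid

variable {α : Type*} [DecidableEq α]

private lemma aux_indep_card_le_basis (M : FinMatroid α) {B A : Finset α}
    (hB : M.IsBasis B) (hA : M.Indep A) : A.card ≤ B.card := by
  by_contra h
  push_neg at h
  obtain ⟨a, ha, hi⟩ := M.exchange hA hB.1 h
  have heq := hB.2 _ hi (subset_insert _ _)
  rw [mem_sdiff] at ha
  exact ha.2 (heq ▸ mem_insert_self a B)

private lemma aux_isBasis_of_indep_card (M : FinMatroid α) {B A : Finset α}
    (hB : M.IsBasis B) (hA : M.Indep A) (hcard : B.card ≤ A.card) : M.IsBasis A :=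
  ⟨hA, fun A' hA' hsub =>
    (Finset.eq_of_subset_of_card_le hsub
      ((aux_indep_card_le_basis M hB hA').trans hcard)).symm⟩

private lemma aux_exists_circuit (M : FinMatroid α) :
    ∀ A : Finset α, A ⊆ M.E → ¬ M.Indep A → ∃ K ⊆ A, M.IsCircuit K := by
  intro A
  induction A using Finset.strongInduction with
  | _ A ih =>
    intro hAE hdep
    by_cases h : ∀ x ∈ A, M.Indep (A.erase x)
    · exact ⟨A, Finset.Subset.rfl, hAE, hdep, h⟩
    · push_neg at h
      obtain ⟨x, hx, hnd⟩ := h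
      obtain ⟨K, hKA, hK⟩ :=
        ih (A.erase x) (Finset.erase_ssubset hx) ((erase_subset _ _).trans hAE) hnd
      exact ⟨K, hKA.trans (erase_subset _ _), hK⟩

private lemma aux_exists_max (M : FinMatroid α) :
    ∀ n (I S : Finset α), S.card - I.card ≤ n → M.Indep I → I ⊆ S →
      ∃ J, I ⊆ J ∧ J ⊆ S ∧ M.Indep J ∧ ∀ x ∈ S, x ∉ J → ¬ M.Indep (insert x J) := by
  intro n
  induction n with
  | zero =>
    intro I S hn hI hIS
    have hIS' : I = S :=
      Finset.eq_of_subset_of_card_le hIS (by omega)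
    exact ⟨I, Finset.Subset.rfl, hIS, hI, fun x hx hnx _ => hnx (hIS' ▸ hx)⟩
  | succ n ih =>
    intro I S hn hI hIS
    by_cases h : ∃ x ∈ S, x ∉ I ∧ M.Indep (insert x I)
    · obtain ⟨x, hxS, hxI, hind⟩ := h
      have hcard : (insert x I).card = I.card + 1 := Finset.card_insert_of_notMem hxI
      have hsub : insert x I ⊆ S := insert_subset hxS hIS
      obtain ⟨J, hJ1, hJ2, hJ3, hJ4⟩ :=
        ih (insert x I) S (by omega) hind hsub
      exact ⟨J, (subset_insert _ _).trans hJ1, hJ2, hJ3, hJ4⟩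
    · push_neg at h
      exact ⟨I, Finset.Subset.rfl, hIS, hI, h⟩

/-- if `e ∉ B` is the heaviest element of a circuit `C ⊆ B + e`
and `B'` is a basis containing `e`, then it is impossible that every exchange
swapping an element `f ∈ C − e`, `f ∉ B'` into `B'` removes only elements of
`C − e`. -/
theorem circuit_exchange_impossible (M : FinMatroid α) (w : α → ℝ)
    (hw : Set.InjOn w ↑M.E)
    (B : Finset α) (hB : M.IsBasis B)
    (e : α) (he : e ∈ M.E) (heB : e ∉ B)
    (C : Finset α) (hC : M.IsCircuit C) (hCe : e ∈ C)
    (hCsub : C ⊆ insert e B)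
    (hheavy : ∀ x ∈ C, x ≠ e → w x < w e)
    (B' : Finset α) (hB' : M.IsBasis B') (heB' : e ∈ B') :
    ¬ (∀ f ∈ C.erase e, f ∉ B' →
        ∀ g ∈ B', M.IsBasis (insert f (B'.erase g)) → g ∈ C.erase e) := by
  intro H
  have hCE : C ⊆ M.E := hC.1
  -- there is some f ∈ C − e outside B'
  by_cases hall : C.erase e ⊆ B'
  · have hCB' : C ⊆ B' := by
      intro x hx
      by_cases hxe : x = e
      · exact hxe ▸ heB'
      · exact hall (mem_erase.mpr ⟨hxe, hx⟩)
    exact hC.2.1 (M.indep_subset hB'.1 hCB')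
  obtain ⟨f, hfC, hfB'⟩ := not_subset.mp hall
  have hfE : f ∈ M.E := hCE (mem_of_mem_erase hfC)
  -- B' + f is dependent
  have hdep : ¬ M.Indep (insert f B') := by
    intro h
    have heq := hB'.2 _ h (subset_insert _ _)
    exact hfB' (heq ▸ mem_insert_self f B')
  -- fundamental circuit K ⊆ B' + f
  obtain ⟨K, hKsub, hK⟩ := aux_exists_circuit M (insert f B')
    (insert_subset hfE (M.indep_subset_ground hB'.1)) hdep
  have hfK : f ∈ K := by
    by_contra hfK
    refine hK.2.1 (M.indep_subset hB'.1 ?_)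
    intro y hy
    rcases mem_insert.mp (hKsub hy) with h | h
    · exact absurd (h ▸ hy) hfK
    · exact h
  -- every element of K lies in C − e
  have key : K ⊆ C.erase e := by
    intro g hg
    by_cases hgf : g = f
    · exact hgf ▸ hfC
    · have hgB' : g ∈ B' := by
        rcases mem_insert.mp (hKsub hg) with h | h
        · exact absurd h hgf
        · exact h
      have hfg : f ≠ g := fun h => hfB' (h ▸ hgB')
      have hKg : M.Indep (K.erase g) := hK.2.2 g hg
      have hKgsub : K.erase g ⊆ insert f B' := (erase_subset _ _).trans hKsub
      -- maximal independent J between K − g and B' + f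
      obtain ⟨J, hJ1, hJ2, hJ3, hJ4⟩ :=
        aux_exists_max M ((insert f B').card - (K.erase g).card) (K.erase g)
          (insert f B') le_rfl hKg hKgsub
      have hJle : J.card ≤ B'.card := aux_indep_card_le_basis M hB' hJ3
      have hJge : B'.card ≤ J.card := by
        by_contra h
        push_neg at h
        obtain ⟨a, ha, hi⟩ := M.exchange hB'.1 hJ3 h
        rw [mem_sdiff] at ha
        exact hJ4 a (mem_insert_of_mem ha.1) ha.2 hi
      have hJcard : J.card = B'.card := le_antisymm hJle hJge
      have hScard : (insert f B').card = B'.card + 1 := card_insert_of_notMem hfB'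
      -- the single element missing from J is g
      have hsd : ((insert f B') \ J).card = 1 := by
        rw [card_sdiff_of_subset hJ2]; omega
      obtain ⟨x, hx⟩ := card_eq_one.mp hsd
      have hxK : x ∈ K := by
        by_contra hxK
        refine hK.2.1 (M.indep_subset hJ3 ?_)
        intro y hy
        by_contra hyJ
        have : y ∈ (insert f B') \ J := mem_sdiff.mpr ⟨hKsub hy, hyJ⟩
        rw [hx, mem_singleton] at this
        exact hxK (this ▸ hy)
      have hxJ : x ∉ J := by
        have : x ∈ (insert f B') \ J := hx ▸ mem_singleton_self x
        exact (mem_sdiff.mp this).2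
      have hxg : x = g := by
        by_contra hxg
        exact hxJ (hJ1 (mem_erase.mpr ⟨hxg, hxK⟩))
      subst hxg
      -- hence J = B' + f − g = (B' − g) + f
      have hJeq : J = insert f (B'.erase x) := by
        rw [← erase_insert_of_ne hfg]
        apply Finset.eq_of_subset_of_card_le
        · intro y hy
          refine mem_erase.mpr ⟨fun h => hxJ (h ▸ hy), hJ2 hy⟩
        · have hgmem : x ∈ insert f B' := mem_insert_of_mem hgB'
          rw [card_erase_of_mem hgmem]
          omega
      have hbasis : M.IsBasis (insert f (B'.erase x)) := by
        rw [← hJeq]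
        exact aux_isBasis_of_indep_card M hB' hJ3 hJge
      exact H f hfC hfB' x hgB' hbasis
  exact hK.2.1 (M.indep_subset (hC.2.2 e hCe) key)
end
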